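/- For each integer n ≥ 2, let T : (L^0)^n → (L^0)^n be an injective map which has the local property. If T maps each L^0-line onto an L^0-line, i.e., for any two distinct points x, y ∈ (L^0)^n the image of the L^0-line l(x,y) under T equals l(T(x), T(y)), then T is an L^0-affine linear map. -/

import Mathlib

/-!
Statements from "The fundamental theorem of affine geometry in `(L⁰)ⁿ`" (Wu–Long).

`L⁰`, the algebra of equivalence classes (under `P`-a.e. equality) of real valued
random variables on a probability space `(Ω, F, P)`, is modeled as `Ω →ₘ[P] ℝ`,
and `(L⁰)ⁿ` as `Fin n → (Ω →ₘ[P] ℝ)` with the pointwise `L⁰`-module structure.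
-/

open MeasureTheory

noncomputable section

variable {Ω : Type*} [MeasurableSpace Ω] {P : Measure Ω}

/-- `L⁰ = Ω →ₘ[P] ℝ` is a commutative ring under the pointwise a.e. operations. -/
instance : CommRing (Ω →ₘ[P] ℝ) :=
  { (inferInstance : AddCommGroup (Ω →ₘ[P] ℝ)),
    (inferInstance : CommMonoid (Ω →ₘ[P] ℝ)) with
    left_distrib := fun a b c => AEEqFun.toGerm_injective <| by
      simp only [AEEqFun.mul_toGerm, AEEqFun.add_toGerm, mul_add]
    right_distrib := fun a b c => AEEqFun.toGerm_injective <| by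
      simp only [AEEqFun.mul_toGerm, AEEqFun.add_toGerm, add_mul]
    zero_mul := fun a => AEEqFun.toGerm_injective <| by
      simp only [AEEqFun.mul_toGerm, AEEqFun.zero_toGerm, zero_mul]
    mul_zero := fun a => AEEqFun.toGerm_injective <| by
      simp only [AEEqFun.mul_toGerm, AEEqFun.zero_toGerm, mul_zero] }

/-- `Ĩ_A` : the equivalence class of the indicator function of a measurable set `A`. -/
def ind (P : Measure Ω) {A : Set Ω} (hA : MeasurableSet A) : Ω →ₘ[P] ℝ :=
  AEEqFun.mk (A.indicator fun _ => (1 : ℝ)) (aestronglyMeasurable_const.indicator hA)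

namespace FTAG

lemma coeFn_ind {A : Set Ω} (hA : MeasurableSet A) :
    ⇑(ind P hA) =ᶠ[ae P] A.indicator fun _ => (1:ℝ) := AEEqFun.coeFn_mk _ _

lemma ind_mul_ind {A B : Set Ω} (hA : MeasurableSet A) (hB : MeasurableSet B) :
    ind P hA * ind P hB = ind P (hA.inter hB) := by
  apply AEEqFun.ext
  filter_upwards [AEEqFun.coeFn_mul (ind P hA) (ind P hB), coeFn_ind hA, coeFn_ind hB,
    coeFn_ind (hA.inter hB)] with ω h1 h2 h3 h4
  simp only [h1, Pi.mul_apply, h2, h3, h4, Set.indicator, Set.mem_inter_iff]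
  by_cases hA' : ω ∈ A <;> by_cases hB' : ω ∈ B <;> simp [hA', hB']

lemma ind_add_compl {A : Set Ω} (hA : MeasurableSet A) :
    ind P hA + ind P hA.compl = 1 := by
  apply AEEqFun.ext
  filter_upwards [AEEqFun.coeFn_add (ind P hA) (ind P hA.compl), coeFn_ind hA,
    coeFn_ind hA.compl, AEEqFun.coeFn_one (α := Ω) (β := ℝ) (μ := P)] with ω h1 h2 h3 h4
  simp only [h1, Pi.add_apply, h2, h3, h4, Set.indicator, Pi.one_apply, Set.mem_compl_iff]
  by_cases hA' : ω ∈ A <;> simp [hA']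

lemma ind_mul_self {A : Set Ω} (hA : MeasurableSet A) :
    ind P hA * ind P hA = ind P hA := by
  rw [ind_mul_ind]
  congr 1
  simp

lemma ind_mul_compl {A : Set Ω} (hA : MeasurableSet A) :
    ind P hA * ind P hA.compl = 0 := by
  apply AEEqFun.ext
  filter_upwards [AEEqFun.coeFn_mul (ind P hA) (ind P hA.compl), coeFn_ind hA,
    coeFn_ind hA.compl, AEEqFun.coeFn_zero (α := Ω) (β := ℝ) (μ := P)] with ω h1 h2 h3 h4
  simp only [h1, Pi.mul_apply, h2, h3, h4, Set.indicator, Pi.zero_apply, Set.mem_compl_iff]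
  by_cases hA' : ω ∈ A <;> simp [hA']

lemma one_ne_zero_R [IsProbabilityMeasure P] : (1 : Ω →ₘ[P] ℝ) ≠ 0 := by
  intro h
  have : (⇑(1 : Ω →ₘ[P] ℝ)) =ᶠ[ae P] ⇑(0 : Ω →ₘ[P] ℝ) := by rw [h]
  have h2 : ∀ᵐ ω ∂P, (1:ℝ) = 0 := by
    filter_upwards [this, AEEqFun.coeFn_one (α := Ω) (β := ℝ) (μ := P),
      AEEqFun.coeFn_zero (α := Ω) (β := ℝ) (μ := P)] with ω h1 ho hz
    rw [ho] at h1; rw [hz] at h1; exact h1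
  have := h2.exists
  rcases this with ⟨ω, hω⟩
  exact one_ne_zero hω

/-- constant function as an element of L⁰ -/
def C (P : Measure Ω) (r : ℝ) : Ω →ₘ[P] ℝ := AEEqFun.mk (fun _ => r) aestronglyMeasurable_const

lemma coeFn_C (r : ℝ) : ⇑(C P r) =ᶠ[ae P] fun _ => r := AEEqFun.coeFn_mk _ _

lemma C_mul (r s : ℝ) : C P r * C P s = C P (r * s) := by
  apply AEEqFun.ext
  filter_upwards [AEEqFun.coeFn_mul (C P r) (C P s), coeFn_C (P := P) r, coeFn_C (P := P) s,
    coeFn_C (P := P) (r*s)] with ω h1 h2 h3 h4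
  simp [h1, h2, h3, h4]

lemma C_add (r s : ℝ) : C P r + C P s = C P (r + s) := by
  apply AEEqFun.ext
  filter_upwards [AEEqFun.coeFn_add (C P r) (C P s), coeFn_C (P := P) r, coeFn_C (P := P) s,
    coeFn_C (P := P) (r+s)] with ω h1 h2 h3 h4
  simp [h1, h2, h3, h4]

lemma C_one : C P 1 = 1 := by
  apply AEEqFun.ext
  filter_upwards [coeFn_C (P := P) 1, AEEqFun.coeFn_one (α := Ω) (β := ℝ) (μ := P)] with ω h1 h2
  simp [h1, h2]


lemma C_zero : C P 0 = 0 := by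
  apply AEEqFun.ext
  filter_upwards [coeFn_C (P := P) 0, AEEqFun.coeFn_zero (α := Ω) (β := ℝ) (μ := P)] with ω h1 h2
  simp [h1, h2]

lemma C_half_add : C P 2⁻¹ + C P 2⁻¹ = 1 := by
  rw [C_add]; norm_num; exact C_one

lemma exists_rep (ξ : Ω →ₘ[P] ℝ) : ∃ g : Ω → ℝ, Measurable g ∧ ⇑ξ =ᶠ[ae P] g := by
  rcases ξ.aestronglyMeasurable.aemeasurable with h
  exact ⟨h.mk _, h.measurable_mk, h.ae_eq_mk⟩

/-- support of a scalar: idempotent in `ind` form with pseudo-inverse. -/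
lemma exists_supp (ξ : Ω →ₘ[P] ℝ) :
    ∃ (A : Set Ω) (hA : MeasurableSet A),
      ind P hA * ξ = ξ ∧ (∃ η, η * ind P hA = η ∧ ξ * η = ind P hA) ∧
      ∀ ζ, ξ * ζ = 0 → ind P hA * ζ = 0 := by
  obtain ⟨g, hg, hgξ⟩ := exists_rep ξ
  set A : Set Ω := {ω | g ω ≠ 0} with hAdef
  have hA : MeasurableSet A := (hg (measurableSet_singleton 0)).compl
  refine ⟨A, hA, ?_, ?_, ?_⟩
  · apply AEEqFun.ext
    filter_upwards [AEEqFun.coeFn_mul (ind P hA) ξ, coeFn_ind hA, hgξ] with ω h1 h2 h3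
    simp only [h1, Pi.mul_apply, h2, h3, Set.indicator]
    by_cases h : ω ∈ A
    · simp [h]
    · simp only [h, if_false, if_neg, zero_mul]
      simp only [hAdef, Set.mem_setOf_eq, not_not] at h
      simp [h3, h]
  · have hmeas : AEStronglyMeasurable (fun ω => if g ω = 0 then 0 else (g ω)⁻¹) P :=
      ((Measurable.ite (hg (measurableSet_singleton 0)) measurable_const hg.inv).aestronglyMeasurable)
    set η : Ω →ₘ[P] ℝ := AEEqFun.mk (fun ω => if g ω = 0 then 0 else (g ω)⁻¹) hmeas with hηdef
    have hηcoe : ⇑η =ᶠ[ae P] fun ω => if g ω = 0 then 0 else (g ω)⁻¹ := AEEqFun.coeFn_mk _ _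
    refine ⟨η, ?_, ?_⟩
    · apply AEEqFun.ext
      filter_upwards [AEEqFun.coeFn_mul η (ind P hA), hηcoe, coeFn_ind hA] with ω h1 h2 h3
      simp only [h1, Pi.mul_apply, h2, h3, Set.indicator]
      by_cases h : g ω = 0
      · simp [h, hAdef]
      · simp [h, hAdef]
    · apply AEEqFun.ext
      filter_upwards [AEEqFun.coeFn_mul ξ η, hηcoe, coeFn_ind hA, hgξ] with ω h1 h2 h3 h4
      simp only [h1, Pi.mul_apply, h2, h3, h4, Set.indicator]
      by_cases h : g ω = 0
      · simp [h, hAdef]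
      · simp [h, hAdef, mul_inv_cancel₀ h]
  · intro ζ hζ
    have hz : ⇑(ξ * ζ) =ᶠ[ae P] ⇑(0 : Ω →ₘ[P] ℝ) := by rw [hζ]
    apply AEEqFun.ext
    filter_upwards [AEEqFun.coeFn_mul (ind P hA) ζ, coeFn_ind hA, hz,
      AEEqFun.coeFn_mul ξ ζ, hgξ, AEEqFun.coeFn_zero (α := Ω) (β := ℝ) (μ := P)] with ω h1 h2 h3 h4 h5 h6
    simp only [h1, Pi.mul_apply, h2, Set.indicator]
    rw [h4, Pi.mul_apply, h5] at h3
    rw [h6] at h3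
    simp only [Pi.zero_apply] at h3 ⊢
    by_cases h : ω ∈ A
    · have hgw : g ω ≠ 0 := h
      have := (mul_eq_zero.1 h3).resolve_left hgw
      simp [h, this, h6]
    · simp [h, h6]

/-- support of a vector -/
lemma exists_vsupp {n : ℕ} (u : Fin n → Ω →ₘ[P] ℝ) :
    ∃ (A : Set Ω) (hA : MeasurableSet A),
      ind P hA • u = u ∧ ∀ γ : Ω →ₘ[P] ℝ, γ • u = 0 → γ * ind P hA = 0 := by
  have hreps : ∀ i, ∃ g : Ω → ℝ, Measurable g ∧ ⇑(u i) =ᶠ[ae P] g := fun i => exists_rep (u i)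
  choose g hg hgu using hreps
  set A : Set Ω := ⋃ i, {ω | g i ω ≠ 0} with hAdef
  have hA : MeasurableSet A :=
    MeasurableSet.iUnion fun i => (hg i (measurableSet_singleton 0)).compl
  have hae : ∀ᵐ ω ∂P, ∀ i, (u i) ω = g i ω := by
    rw [MeasureTheory.ae_all_iff]; exact hgu
  refine ⟨A, hA, ?_, ?_⟩
  · funext i
    apply AEEqFun.ext
    filter_upwards [AEEqFun.coeFn_mul (ind P hA) (u i), coeFn_ind hA, hgu i] with ω h1 h2 h3
    show (ind P hA * u i) ω = (u i) ω
    simp only [h1, Pi.mul_apply, h2, Set.indicator]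
    by_cases h : ω ∈ A
    · simp [h]
    · have hz : g i ω = 0 := by
        by_contra hne
        exact h (Set.mem_iUnion.2 ⟨i, hne⟩)
      simp [h, h3, hz]
  · intro γ hγ
    have hco : ∀ i, γ * u i = 0 := fun i => congrFun hγ i
    have hco' : ∀ᵐ ω ∂P, ∀ i, γ ω * g i ω = 0 := by
      rw [MeasureTheory.ae_all_iff]
      intro i
      have : ⇑(γ * u i) =ᶠ[ae P] ⇑(0 : Ω →ₘ[P] ℝ) := by rw [hco i]
      filter_upwards [this, AEEqFun.coeFn_mul γ (u i), hgu i,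
        AEEqFun.coeFn_zero (α := Ω) (β := ℝ) (μ := P)] with ω h1 h2 h3 h4
      rw [h2, Pi.mul_apply, h3] at h1; rw [h4] at h1; exact h1
    apply AEEqFun.ext
    filter_upwards [AEEqFun.coeFn_mul γ (ind P hA), coeFn_ind hA, hco',
      AEEqFun.coeFn_zero (α := Ω) (β := ℝ) (μ := P)] with ω h1 h2 h3 h4
    simp only [h1, Pi.mul_apply, h2, h4, Set.indicator, Pi.zero_apply]
    by_cases h : ω ∈ A
    · simp only [h, if_true, mul_one]
      obtain ⟨i, hi⟩ := Set.mem_iUnion.1 h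
      exact (mul_eq_zero.1 (h3 i)).resolve_right hi
    · simp [h]

lemma sq_nonneg_ae (β : Ω →ₘ[P] ℝ) : ∀ᵐ ω ∂P, 0 ≤ (β * β) ω := by
  filter_upwards [AEEqFun.coeFn_mul β β] with ω h1
  rw [h1]; exact mul_self_nonneg _

lemma exists_sq_of_nonneg (x : Ω →ₘ[P] ℝ) (hx : ∀ᵐ ω ∂P, 0 ≤ x ω) :
    ∃ β : Ω →ₘ[P] ℝ, β * β = x := by
  obtain ⟨g, hg, hgx⟩ := exists_rep x
  refine ⟨AEEqFun.mk (fun ω => Real.sqrt (g ω))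
    (Real.continuous_sqrt.measurable.comp hg).aestronglyMeasurable, ?_⟩
  apply AEEqFun.ext
  filter_upwards [AEEqFun.coeFn_mul (AEEqFun.mk (fun ω => Real.sqrt (g ω))
    (Real.continuous_sqrt.measurable.comp hg).aestronglyMeasurable) _,
    AEEqFun.coeFn_mk (μ := P) (fun ω => Real.sqrt (g ω)) _, hgx, hx] with ω h1 h2 h3 h4
  rw [h1, Pi.mul_apply, h2, h3]
  rw [h3] at h4
  exact Real.mul_self_sqrt h4


lemma ind_congr {A B : Set Ω} (hA : MeasurableSet A) (hB : MeasurableSet B) (h : A = B) :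
    ind P hA = ind P hB := by subst h; rfl

lemma ind_null {A : Set Ω} (hA : MeasurableSet A) (h : A = ∅) :
    ind P hA = (0 : Ω →ₘ[P] ℝ) := by
  subst h
  apply AEEqFun.ext
  filter_upwards [coeFn_ind hA, AEEqFun.coeFn_zero (α := Ω) (β := ℝ) (μ := P)] with ω h1 h2
  simp [h1, h2]

section Main

variable {n : ℕ}

/-- bundled hypotheses (after normalizing `T 0 = 0`). -/
structure Nice (P : Measure Ω) (n : ℕ) (T : (Fin n → Ω →ₘ[P] ℝ) → (Fin n → Ω →ₘ[P] ℝ)) : Prop where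
  inj : Function.Injective T
  loc : ∀ (x : Fin n → Ω →ₘ[P] ℝ) (A : Set Ω) (hA : MeasurableSet A),
      ind P hA • T (ind P hA • x) = ind P hA • T x
  line : ∀ x y : Fin n → Ω →ₘ[P] ℝ, x ≠ y →
      T '' {z | ∃ lam : Ω →ₘ[P] ℝ, z = lam • x + (1 - lam) • y}
        = {z | ∃ lam : Ω →ₘ[P] ℝ, z = lam • T x + (1 - lam) • T y}
  zero : T 0 = 0

variable {T : (Fin n → Ω →ₘ[P] ℝ) → (Fin n → Ω →ₘ[P] ℝ)} (hT : Nice P n T)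

/-- patching a vector equality from a set and its complement -/
lemma piece_ext {A : Set Ω} (hA : MeasurableSet A) {z w : Fin n → Ω →ₘ[P] ℝ}
    (h1 : ind P hA • z = ind P hA • w) (h2 : ind P hA.compl • z = ind P hA.compl • w) :
    z = w := by
  have : (ind P hA + ind P hA.compl) • z = (ind P hA + ind P hA.compl) • w := by
    rw [add_smul, add_smul, h1, h2]
  rwa [ind_add_compl, one_smul, one_smul] at this

include hT

lemma Nice.L1 {A : Set Ω} (hA : MeasurableSet A) {u v : Fin n → Ω →ₘ[P] ℝ}
    (h : ind P hA • u = ind P hA • v) : ind P hA • T u = ind P hA • T v := by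
  rw [← hT.loc u A hA, ← hT.loc v A hA, h]

lemma Nice.L2 {A : Set Ω} (hA : MeasurableSet A) {u v : Fin n → Ω →ₘ[P] ℝ}
    (h : ind P hA • T u = ind P hA • T v) : ind P hA • u = ind P hA • v := by
  set w := ind P hA • v + ind P hA.compl • u with hw
  have h1 : ind P hA • w = ind P hA • v := by
    rw [hw, smul_add, ← mul_smul, ← mul_smul, ind_mul_self, ind_mul_compl, zero_smul, add_zero]
  have h2 : ind P hA.compl • w = ind P hA.compl • u := by
    rw [hw, smul_add, ← mul_smul, ← mul_smul]
    rw [show ind P hA.compl * ind P hA = 0 from by rw [mul_comm]; exact ind_mul_compl hA]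
    rw [ind_mul_self, zero_smul, zero_add]
  have hTw : T w = T u := by
    apply piece_ext hA
    · rw [hT.L1 hA h1, ← h]
    · exact hT.L1 hA.compl h2
  have := hT.inj hTw
  rw [← this, h1]

lemma Nice.T_ind_smul {A : Set Ω} (hA : MeasurableSet A) (x : Fin n → Ω →ₘ[P] ℝ) :
    T (ind P hA • x) = ind P hA • T x := by
  apply piece_ext hA
  · rw [hT.loc x A hA, ← mul_smul, ind_mul_self]
  · have hz : ind P hA.compl • (ind P hA • x) = ind P hA.compl • (0 : Fin n → Ω →ₘ[P] ℝ) := by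
      rw [smul_zero, ← mul_smul]
      rw [show ind P hA.compl * ind P hA = 0 from by rw [mul_comm]; exact ind_mul_compl hA]
      rw [zero_smul]
    have := hT.L1 hA.compl hz
    rw [hT.zero, smul_zero] at this
    rw [this, ← mul_smul, mul_comm, ind_mul_compl, zero_smul]

lemma Nice.restrict_fix {A : Set Ω} (hA : MeasurableSet A) {x : Fin n → Ω →ₘ[P] ℝ}
    (hx : ind P hA • x = x) : ind P hA • T x = T x := by
  conv_rhs => rw [← hx, hT.T_ind_smul hA]

lemma Nice.smul_T_zero {A : Set Ω} (hA : MeasurableSet A) {z : Fin n → Ω →ₘ[P] ℝ}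
    (hz : ind P hA • z = 0) : ind P hA • T z = 0 := by
  have : ind P hA • z = ind P hA • (0 : Fin n → Ω →ₘ[P] ℝ) := by rw [hz, smul_zero]
  rw [hT.L1 hA this, hT.zero, smul_zero]

lemma Nice.scalar_ann {ζ : Ω →ₘ[P] ℝ} {x : Fin n → Ω →ₘ[P] ℝ}
    (h : ζ • T x = 0) : ζ • x = 0 := by
  obtain ⟨A, hA, hmul, _, hann⟩ := exists_supp ζ
  have h1 : ind P hA • T x = 0 := by
    funext i
    have : ζ * (T x i) = 0 := congrFun h i
    exact hann _ this
  have h2 : ind P hA • T x = ind P hA • T 0 := by rw [hT.zero, smul_zero, h1]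
  have h3 := hT.L2 hA h2
  rw [smul_zero] at h3
  calc ζ • x = (ind P hA * ζ) • x := by rw [hmul]
  _ = (ζ * ind P hA) • x := by rw [mul_comm]
  _ = ζ • (ind P hA • x) := by rw [mul_smul]
  _ = 0 := by rw [h3, smul_zero]

lemma Nice.line_mem {x y : Fin n → Ω →ₘ[P] ℝ} (hxy : x ≠ y) (lam : Ω →ₘ[P] ℝ) :
    ∃ mu : Ω →ₘ[P] ℝ, T (lam • x + (1-lam) • y) = mu • T x + (1-mu) • T y := by
  have hmem : lam • x + (1-lam) • y ∈ {z | ∃ l : Ω →ₘ[P] ℝ, z = l • x + (1-l) • y} := ⟨lam, rfl⟩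
  have : T (lam • x + (1-lam) • y) ∈ T '' {z | ∃ l : Ω →ₘ[P] ℝ, z = l • x + (1-l) • y} :=
    Set.mem_image_of_mem T hmem
  rw [hT.line x y hxy] at this
  simp only [Set.mem_setOf_eq] at this
  exact this

lemma Nice.line_surj {x y : Fin n → Ω →ₘ[P] ℝ} (hxy : x ≠ y) (mu : Ω →ₘ[P] ℝ) :
    ∃ lam : Ω →ₘ[P] ℝ, T (lam • x + (1-lam) • y) = mu • T x + (1-mu) • T y := by
  have hm : mu • T x + (1-mu) • T y ∈
      {z | ∃ l : Ω →ₘ[P] ℝ, z = l • T x + (1-l) • T y} := Set.mem_setOf_eq ▸ ⟨mu, rfl⟩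
  rw [← hT.line x y hxy] at hm
  obtain ⟨z, hz1, hz2⟩ := hm
  simp only [Set.mem_setOf_eq] at hz1
  obtain ⟨lam, rfl⟩ := hz1
  exact ⟨lam, hz2⟩

lemma Nice.ray_mem {x : Fin n → Ω →ₘ[P] ℝ} (hx : x ≠ 0) (lam : Ω →ₘ[P] ℝ) :
    ∃ mu : Ω →ₘ[P] ℝ, T (lam • x) = mu • T x := by
  obtain ⟨mu, hmu⟩ := hT.line_mem (y := 0) hx lam
  refine ⟨mu, ?_⟩
  rw [smul_zero, add_zero] at hmu
  rw [hmu, hT.zero, smul_zero, add_zero]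

lemma Nice.ray_surj {x : Fin n → Ω →ₘ[P] ℝ} (hx : x ≠ 0) (mu : Ω →ₘ[P] ℝ) :
    ∃ lam : Ω →ₘ[P] ℝ, T (lam • x) = mu • T x := by
  obtain ⟨lam, hlam⟩ := hT.line_surj (y := 0) hx mu
  refine ⟨lam, ?_⟩
  rw [smul_zero, add_zero, hT.zero, smul_zero, add_zero] at hlam
  exact hlam

set_option maxHeartbeats 1000000 in
lemma Nice.add1 {A : Set Ω} (hA : MeasurableSet A) {x y : Fin n → Ω →ₘ[P] ℝ}
    (hx : ind P hA • x = x) (hy : ind P hA • y = y)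
    (H : ∀ α β : Ω →ₘ[P] ℝ, α • x + β • y = 0 → α * ind P hA = 0 ∧ β * ind P hA = 0) :
    T (x + y) = T x + T y := by
  by_cases he : ind P hA = 0
  · have hx0 : x = 0 := by rw [← hx, he, zero_smul]
    have hy0 : y = 0 := by rw [← hy, he, zero_smul]
    rw [hx0, hy0, add_zero, hT.zero, add_zero]
  have hx0 : x ≠ 0 := by
    intro h
    exact he (by simpa using (H 1 0 (by rw [h]; simp)).1)
  have hy0 : y ≠ 0 := by
    intro h
    exact he (by simpa using (H 0 1 (by rw [h]; simp)).2)
  have hxy : x ≠ y := by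
    intro h
    exact he (by simpa using (H 1 (-1) (by rw [h]; module)).1)
  have hyxy : y ≠ x + y := by
    intro h
    exact hx0 (right_eq_add.1 h)
  have hxxy : x ≠ x + y := by
    intro h
    exact hy0 (left_eq_add.1 h)
  have hhalf : C P 2⁻¹ + C P 2⁻¹ = 1 := C_half_add
  have hhalf' : (1:Ω →ₘ[P] ℝ) - C P 2⁻¹ = C P 2⁻¹ := by
    rw [← hhalf]; ring
  have key : ∀ z : Fin n → Ω →ₘ[P] ℝ, C P 2⁻¹ • (z + z) = z := by
    intro z
    rw [smul_add, ← add_smul, hhalf, one_smul]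
  have hdd : x + x ≠ y + y := by
    intro h
    apply hxy
    calc x = C P 2⁻¹ • (x+x) := (key x).symm
    _ = C P 2⁻¹ • (y+y) := by rw [h]
    _ = y := key y
  obtain ⟨mu, hmu⟩ := hT.line_mem hdd (C P 2⁻¹)
  have hxy2 : C P 2⁻¹ • (x+x) + (1 - C P 2⁻¹) • (y+y) = x + y := by
    rw [hhalf', key, key]
  rw [hxy2] at hmu
  have hxx : x + x = (1+1 : Ω →ₘ[P] ℝ) • x := by module
  have hyy : y + y = (1+1 : Ω →ₘ[P] ℝ) • y := by module
  obtain ⟨c, hc⟩ := hT.ray_mem hx0 (1+1)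
  obtain ⟨d, hd⟩ := hT.ray_mem hy0 (1+1)
  rw [hxx, hc, hyy, hd] at hmu
  set a := mu * c with ha
  set b := (1 - mu) * d with hb
  have hTxy : T (x + y) = a • T x + b • T y := by
    rw [hmu, ha, hb]; module
  have hrx : ind P hA • T x = T x := hT.restrict_fix hA hx
  have hry : ind P hA • T y = T y := hT.restrict_fix hA hy
  have hrxy : ind P hA • T (x+y) = T (x+y) :=
    hT.restrict_fix hA (by rw [smul_add, hx, hy])
  have hbkey : ind P hA * b = ind P hA := by
    set ν := ind P hA * (b - 1) with hν
    obtain ⟨A', hA', hs1, ⟨η, hη1, hη2⟩, hann⟩ := exists_supp ν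
    have hee : ind P hA * (1 - ind P hA) = 0 := by
      rw [mul_sub, ind_mul_self, mul_one, sub_self]
    have he'e : ind P hA' * ind P hA = ind P hA' := by
      have h0 : ν * (1 - ind P hA) = 0 := by
        calc ν * (1 - ind P hA) = (b-1) * (ind P hA * (1 - ind P hA)) := by rw [hν]; ring
        _ = 0 := by rw [hee, mul_zero]
      have h1 := hann _ h0
      have h2 : ind P hA' - ind P hA' * ind P hA = 0 := by rw [← h1]; ring
      exact (sub_eq_zero.1 h2).symm
    set s := -η with hs
    have hsb : s * (b - 1) = - ind P hA' := by
      have h5 : η * (b - 1) = ind P hA' := by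
        calc η * (b-1) = (η * ind P hA') * (b-1) := by rw [hη1]
        _ = η * ((ind P hA' * ind P hA) * (b-1)) := by rw [he'e]; ring
        _ = (η * ind P hA') * ν := by rw [hν]; ring
        _ = η * ν := by rw [hη1]
        _ = ind P hA' := by rw [mul_comm]; exact hη2
      rw [hs, neg_mul, h5]
    obtain ⟨lam1, hw⟩ := hT.line_surj hyxy (1 - s)
    rw [sub_sub_cancel] at hw
    have hwform : lam1 • y + (1-lam1) • (x+y) = (1-lam1) • x + y := by module
    obtain ⟨t, hq⟩ := hT.ray_surj hx0 (s * a)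
    have hp : (1-s) • T y + s • T (x+y) = (s*a) • T x + (1 + s*(b-1)) • T y := by
      rw [hTxy]; module
    have hcoef : (1 : Ω →ₘ[P] ℝ) + s*(b-1) = 1 - ind P hA' := by rw [hsb]; ring
    have he'0 : ind P hA' * (1 - ind P hA') = 0 := by
      rw [mul_sub, ind_mul_self, mul_one, sub_self]
    have hpq : ind P hA' • T (lam1 • y + (1-lam1) • (x+y)) = ind P hA' • T (t • x) := by
      rw [hw, hq, hp, hcoef]
      have expand : ind P hA' • ((s*a) • T x + (1 - ind P hA') • T y)
          = ind P hA' • ((s*a) • T x) + (ind P hA' * (1 - ind P hA')) • T y := by module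
      rw [expand, he'0, zero_smul, add_zero]
    have hL2 := hT.L2 hA' hpq
    rw [hwform] at hL2
    have hrel : (ind P hA' * ((1-lam1) - t)) • x + ind P hA' • y = 0 := by
      have hdiff : (ind P hA' * ((1-lam1) - t)) • x + ind P hA' • y
          = ind P hA' • ((1-lam1) • x + y) - ind P hA' • (t • x) := by module
      rw [hdiff, hL2, sub_self]
    obtain ⟨h1, h2⟩ := H _ _ hrel
    have he'z : ind P hA' = 0 := by rw [← he'e, h2]
    have hν0 : ν = 0 := by rw [← hs1, he'z, zero_mul]
    have hb1 : ind P hA * (b - 1) = 0 := by rw [← hν]; exact hν0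
    calc ind P hA * b = ind P hA * (b-1) + ind P hA := by ring
    _ = ind P hA := by rw [hb1, zero_add]
  have hakey : ind P hA * a = ind P hA := by
    set ν := ind P hA * (a - 1) with hν
    obtain ⟨A', hA', hs1, ⟨η, hη1, hη2⟩, hann⟩ := exists_supp ν
    have hee : ind P hA * (1 - ind P hA) = 0 := by
      rw [mul_sub, ind_mul_self, mul_one, sub_self]
    have he'e : ind P hA' * ind P hA = ind P hA' := by
      have h0 : ν * (1 - ind P hA) = 0 := by
        calc ν * (1 - ind P hA) = (a-1) * (ind P hA * (1 - ind P hA)) := by rw [hν]; ring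
        _ = 0 := by rw [hee, mul_zero]
      have h1 := hann _ h0
      have h2 : ind P hA' - ind P hA' * ind P hA = 0 := by rw [← h1]; ring
      exact (sub_eq_zero.1 h2).symm
    set s := -η with hs
    have hsb : s * (a - 1) = - ind P hA' := by
      have h5 : η * (a - 1) = ind P hA' := by
        calc η * (a-1) = (η * ind P hA') * (a-1) := by rw [hη1]
        _ = η * ((ind P hA' * ind P hA) * (a-1)) := by rw [he'e]; ring
        _ = (η * ind P hA') * ν := by rw [hν]; ring
        _ = η * ν := by rw [hη1]
        _ = ind P hA' := by rw [mul_comm]; exact hη2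
      rw [hs, neg_mul, h5]
    obtain ⟨lam1, hw⟩ := hT.line_surj hxxy (1 - s)
    rw [sub_sub_cancel] at hw
    have hwform : lam1 • x + (1-lam1) • (x+y) = x + (1-lam1) • y := by module
    obtain ⟨t, hq⟩ := hT.ray_surj hy0 (s * b)
    have hp : (1-s) • T x + s • T (x+y) = (1 + s*(a-1)) • T x + (s*b) • T y := by
      rw [hTxy]; module
    have hcoef : (1 : Ω →ₘ[P] ℝ) + s*(a-1) = 1 - ind P hA' := by rw [hsb]; ring
    have he'0 : ind P hA' * (1 - ind P hA') = 0 := by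
      rw [mul_sub, ind_mul_self, mul_one, sub_self]
    have hpq : ind P hA' • T (lam1 • x + (1-lam1) • (x+y)) = ind P hA' • T (t • y) := by
      rw [hw, hq, hp, hcoef]
      have expand : ind P hA' • ((1 - ind P hA') • T x + (s*b) • T y)
          = (ind P hA' * (1 - ind P hA')) • T x + ind P hA' • ((s*b) • T y) := by module
      rw [expand, he'0, zero_smul, zero_add]
    have hL2 := hT.L2 hA' hpq
    rw [hwform] at hL2
    have hrel : ind P hA' • x + (ind P hA' * ((1-lam1) - t)) • y = 0 := by
      have hdiff : ind P hA' • x + (ind P hA' * ((1-lam1) - t)) • y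
          = ind P hA' • (x + (1-lam1) • y) - ind P hA' • (t • y) := by module
      rw [hdiff, hL2, sub_self]
    obtain ⟨h1, h2⟩ := H _ _ hrel
    have he'z : ind P hA' = 0 := by rw [← he'e, h1]
    have hν0 : ν = 0 := by rw [← hs1, he'z, zero_mul]
    have ha1 : ind P hA * (a - 1) = 0 := by rw [← hν]; exact hν0
    calc ind P hA * a = ind P hA * (a-1) + ind P hA := by ring
    _ = ind P hA := by rw [ha1, zero_add]
  calc T (x+y) = ind P hA • T (x+y) := hrxy.symm
  _ = ind P hA • (a • T x + b • T y) := by rw [hTxy]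
  _ = (ind P hA * a) • T x + (ind P hA * b) • T y := by module
  _ = ind P hA • T x + ind P hA • T y := by rw [hakey, hbkey]
  _ = T x + T y := by rw [hrx, hry]

lemma Nice.addQI {u v : Fin n → Ω →ₘ[P] ℝ}
    (H : ∀ γ δ : Ω →ₘ[P] ℝ, γ • u + δ • v = 0 → γ • u = 0 ∧ δ • v = 0) :
    T (u + v) = T u + T v := by
  obtain ⟨A, hA, hAu, hAann⟩ := exists_vsupp u
  obtain ⟨B, hB, hBv, hBann⟩ := exists_vsupp v
  have heA : ind P (hA.inter hB) * ind P hA = ind P (hA.inter hB) := by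
    rw [ind_mul_ind]
    exact ind_congr _ _ (by ext ω; simp only [Set.mem_inter_iff]; tauto)
  have heB : ind P (hA.inter hB) * ind P hB = ind P (hA.inter hB) := by
    rw [ind_mul_ind]
    exact ind_congr _ _ (by ext ω; simp only [Set.mem_inter_iff]; tauto)
  have hsum : T (ind P (hA.inter hB) • u + ind P (hA.inter hB) • v)
      = T (ind P (hA.inter hB) • u) + T (ind P (hA.inter hB) • v) := by
    apply hT.add1 (hA.inter hB)
    · rw [← mul_smul, ind_mul_self]
    · rw [← mul_smul, ind_mul_self]
    · intro α β hab
      have hab' : (α * ind P (hA.inter hB)) • u + (β * ind P (hA.inter hB)) • v = 0 := by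
        rw [mul_smul, mul_smul]; exact hab
      obtain ⟨hu0, hv0⟩ := H _ _ hab'
      constructor
      · have h1 := hAann _ hu0
        calc α * ind P (hA.inter hB) = α * (ind P (hA.inter hB) * ind P hA) := by rw [heA]
        _ = (α * ind P (hA.inter hB)) * ind P hA := by ring
        _ = 0 := h1
      · have h1 := hBann _ hv0
        calc β * ind P (hA.inter hB) = β * (ind P (hA.inter hB) * ind P hB) := by rw [heB]
        _ = (β * ind P (hA.inter hB)) * ind P hB := by ring
        _ = 0 := h1
  have p1 : ind P (hA.inter hB) • T (u+v) = ind P (hA.inter hB) • (T u + T v) := by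
    calc ind P (hA.inter hB) • T (u+v)
        = ind P (hA.inter hB) • T (ind P (hA.inter hB) • (u+v)) := (hT.loc _ _ _).symm
    _ = ind P (hA.inter hB) • T (ind P (hA.inter hB) • u + ind P (hA.inter hB) • v) := by
        rw [smul_add]
    _ = ind P (hA.inter hB) • (T (ind P (hA.inter hB) • u) + T (ind P (hA.inter hB) • v)) := by
        rw [hsum]
    _ = ind P (hA.inter hB) • T (ind P (hA.inter hB) • u)
          + ind P (hA.inter hB) • T (ind P (hA.inter hB) • v) := smul_add _ _ _
    _ = ind P (hA.inter hB) • T u + ind P (hA.inter hB) • T v := by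
        rw [hT.loc u _ (hA.inter hB), hT.loc v _ (hA.inter hB)]
    _ = ind P (hA.inter hB) • (T u + T v) := (smul_add _ _ _).symm
  have pz : ∀ {S : Set Ω} (hS : MeasurableSet S), ind P hS • u = 0 →
      ind P hS • T (u+v) = ind P hS • (T u + T v) := by
    intro S hS hu0
    have h2 : ind P hS • (u+v) = ind P hS • v := by rw [smul_add, hu0, zero_add]
    have h3 : ind P hS • T (u+v) = ind P hS • T v := hT.L1 hS h2
    have h4 : ind P hS • T u = 0 := hT.smul_T_zero hS hu0
    rw [h3, smul_add, h4, zero_add]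
  have pz' : ∀ {S : Set Ω} (hS : MeasurableSet S), ind P hS • v = 0 →
      ind P hS • T (u+v) = ind P hS • (T u + T v) := by
    intro S hS hv0
    have h2 : ind P hS • (u+v) = ind P hS • u := by rw [smul_add, hv0, add_zero]
    have h3 : ind P hS • T (u+v) = ind P hS • T u := hT.L1 hS h2
    have h4 : ind P hS • T v = 0 := hT.smul_T_zero hS hv0
    rw [h3, smul_add, h4, add_zero]
  have huz : ∀ {S : Set Ω} (hS : MeasurableSet S), S ∩ A = ∅ → ind P hS • u = 0 := by
    intro S hS hSA
    calc ind P hS • u = ind P hS • (ind P hA • u) := by rw [hAu]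
    _ = (ind P hS * ind P hA) • u := by rw [mul_smul]
    _ = ind P (hS.inter hA) • u := by rw [ind_mul_ind]
    _ = 0 := by rw [ind_null _ hSA, zero_smul]
  have hvz : ∀ {S : Set Ω} (hS : MeasurableSet S), S ∩ B = ∅ → ind P hS • v = 0 := by
    intro S hS hSB
    calc ind P hS • v = ind P hS • (ind P hB • v) := by rw [hBv]
    _ = (ind P hS * ind P hB) • v := by rw [mul_smul]
    _ = ind P (hS.inter hB) • v := by rw [ind_mul_ind]
    _ = 0 := by rw [ind_null _ hSB, zero_smul]
  apply piece_ext hA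
  · apply piece_ext hB
    · rw [← mul_smul, ← mul_smul, ind_mul_ind]
      have hBA : ind P (hB.inter hA) = ind P (hA.inter hB) := ind_congr _ _ (Set.inter_comm B A)
      rw [hBA]
      exact p1
    · rw [← mul_smul, ← mul_smul, ind_mul_ind]
      refine pz' _ (hvz _ ?_)
      ext ω; simp only [Set.mem_inter_iff, Set.mem_compl_iff, Set.mem_empty_iff_false,
        iff_false]; tauto
  · apply piece_ext hB
    · rw [← mul_smul, ← mul_smul, ind_mul_ind]
      refine pz _ (huz _ ?_)
      ext ω; simp only [Set.mem_inter_iff, Set.mem_compl_iff, Set.mem_empty_iff_false,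
        iff_false]; tauto
    · rw [← mul_smul, ← mul_smul, ind_mul_ind]
      refine pz _ (huz _ ?_)
      ext ω; simp only [Set.mem_inter_iff, Set.mem_compl_iff, Set.mem_empty_iff_false,
        iff_false]; tauto

omit hT in
/-- standard basis vector -/
def eps (P : Measure Ω) {n : ℕ} (i : Fin n) : Fin n → Ω →ₘ[P] ℝ := Pi.single i 1

omit hT in
lemma eps_apply {n : ℕ} (i j : Fin n) :
    eps P i j = if j = i then 1 else 0 := Pi.single_apply i 1 j

omit hT in
lemma eps_ne_zero [IsProbabilityMeasure P] {n : ℕ} (i : Fin n) : eps P i ≠ 0 := by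
  intro h
  have h2 := congrFun h i
  rw [eps_apply] at h2
  simp only [if_pos rfl] at h2
  exact one_ne_zero_R h2

lemma Nice.ann_f [IsProbabilityMeasure P] (i : Fin n) {ζ : Ω →ₘ[P] ℝ}
    (h : ζ • T (eps P i) = 0) : ζ = 0 := by
  have h1 := hT.scalar_ann h
  have h2 := congrFun h1 i
  have h3 : ζ * eps P i i = 0 := h2
  rw [eps_apply] at h3
  simpa using h3

lemma Nice.match_pair [IsProbabilityMeasure P] {i j : Fin n} (hij : i ≠ j)
    {a b a' b' : Ω →ₘ[P] ℝ}
    (h : a • T (eps P i) + b • T (eps P j) = a' • T (eps P i) + b' • T (eps P j)) :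
    a = a' ∧ b = b' := by
  have h2 : (a - a') • T (eps P i) - (b' - b) • T (eps P j)
      = (a • T (eps P i) + b • T (eps P j)) - (a' • T (eps P i) + b' • T (eps P j)) := by
    module
  rw [h, sub_self] at h2
  have h' : (a - a') • T (eps P i) = (b' - b) • T (eps P j) := sub_eq_zero.1 h2
  obtain ⟨lam, hlam⟩ := hT.ray_surj (eps_ne_zero i) (a - a')
  obtain ⟨mu, hmu⟩ := hT.ray_surj (eps_ne_zero j) (b' - b)
  have heq : T (lam • eps P i) = T (mu • eps P j) := by rw [hlam, hmu, h']
  have heq2 := hT.inj heq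
  have hli : lam = 0 := by
    have h4 : lam * eps P i i = mu * eps P j i := congrFun heq2 i
    rw [eps_apply, eps_apply] at h4
    simpa [hij] using h4
  have hmj : mu = 0 := by
    have h4 : lam * eps P i j = mu * eps P j j := congrFun heq2 j
    rw [eps_apply, eps_apply] at h4
    simpa [Ne.symm hij] using h4.symm
  constructor
  · have h5 : (a - a') • T (eps P i) = 0 := by
      rw [← hlam, hli, zero_smul, hT.zero]
    exact sub_eq_zero.1 (hT.ann_f i h5)
  · have h5 : (b' - b) • T (eps P j) = 0 := by
      rw [← hmu, hmj, zero_smul, hT.zero]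
    exact (sub_eq_zero.1 (hT.ann_f j h5)).symm

lemma Nice.add_eps [IsProbabilityMeasure P] {i j : Fin n} (hij : i ≠ j)
    (α β : Ω →ₘ[P] ℝ) :
    T (α • eps P i + β • eps P j) = T (α • eps P i) + T (β • eps P j) := by
  apply hT.addQI
  intro γ δ hgd
  have hi : γ * α = 0 := by
    have h4 := congrFun hgd i
    have h5 : γ * (α * eps P i i) + δ * (β * eps P j i) = 0 := h4
    rw [eps_apply, eps_apply] at h5
    simpa [hij] using h5
  have hjc : δ * β = 0 := by
    have h4 := congrFun hgd j
    have h5 : γ * (α * eps P i j) + δ * (β * eps P j j) = 0 := h4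
    rw [eps_apply, eps_apply] at h5
    simpa [Ne.symm hij] using h5
  constructor
  · funext k
    show γ * (α * eps P i k) = 0
    rw [eps_apply]
    by_cases hk : k = i
    · simp only [if_pos hk, mul_one, ← mul_assoc, hi, zero_mul]
    · simp [if_neg hk]
  · funext k
    show δ * (β * eps P j k) = 0
    rw [eps_apply]
    by_cases hk : k = j
    · simp only [if_pos hk, mul_one, ← mul_assoc, hjc, zero_mul]
    · simp [if_neg hk]

set_option maxHeartbeats 1000000 in
lemma Nice.homog [IsProbabilityMeasure P] (hn : 2 ≤ n) :
    ∀ (i : Fin n) (α : Ω →ₘ[P] ℝ), T (α • eps P i) = α • T (eps P i) := by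
  classical
  have hσe : ∀ (i : Fin n) (α : Ω →ₘ[P] ℝ), ∃ μ : Ω →ₘ[P] ℝ,
      T (α • eps P i) = μ • T (eps P i) := fun i α => hT.ray_mem (eps_ne_zero i) α
  choose σ hσ using hσe
  have huniq : ∀ (i : Fin n) (α μ : Ω →ₘ[P] ℝ),
      T (α • eps P i) = μ • T (eps P i) → σ i α = μ := by
    intro i α μ h
    have h2 : (σ i α - μ) • T (eps P i) = 0 := by
      rw [sub_smul, ← hσ i α, ← h, sub_self]
    exact sub_eq_zero.1 (hT.ann_f i h2)
  have hσ1 : ∀ i, σ i 1 = 1 := fun i => huniq i 1 1 (by rw [one_smul, one_smul])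
  have hσ0 : ∀ i, σ i 0 = 0 := fun i => huniq i 0 0 (by rw [zero_smul, zero_smul, hT.zero])
  have hσind : ∀ (i : Fin n) {A : Set Ω} (hA : MeasurableSet A),
      σ i (ind P hA) = ind P hA := by
    intro i A hA
    exact huniq i _ _ (hT.T_ind_smul hA _)
  have hpartner : ∀ i : Fin n, ∃ j : Fin n, j ≠ i := by
    intro i
    have : Nontrivial (Fin n) := Fin.nontrivial_iff_two_le.2 hn
    exact exists_ne i
  have hσadd : ∀ i α β, σ i (α + β) = σ i α + σ i β := by
    intro i α β
    obtain ⟨j, hj⟩ := hpartner i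
    have hij : i ≠ j := Ne.symm hj
    have e1 : T ((α+β) • eps P i + (1 : Ω →ₘ[P] ℝ) • eps P j)
        = T ((α+β) • eps P i) + T ((1 : Ω →ₘ[P] ℝ) • eps P j) := hT.add_eps hij _ _
    have QI2 : ∀ γ δ : Ω →ₘ[P] ℝ,
        γ • (α • eps P i + eps P j) + δ • (β • eps P i) = 0 →
        γ • (α • eps P i + eps P j) = 0 ∧ δ • (β • eps P i) = 0 := by
      intro γ δ hgd
      have hcj : γ * (α * eps P i j + eps P j j) + δ * (β * eps P i j) = 0 := congrFun hgd j
      rw [eps_apply, eps_apply] at hcj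
      have hγ : γ = 0 := by simpa [Ne.symm hij] using hcj
      have hci : γ * (α * eps P i i + eps P j i) + δ * (β * eps P i i) = 0 := congrFun hgd i
      rw [eps_apply, eps_apply] at hci
      have hδβ : δ * β = 0 := by simpa [hij, hγ] using hci
      constructor
      · rw [hγ]; funext k; show (0 : Ω →ₘ[P] ℝ) * _ = _; simp
      · funext k
        show δ * (β * eps P i k) = 0
        rw [eps_apply]
        by_cases hk : k = i
        · simp only [if_pos hk, mul_one, ← mul_assoc, hδβ, zero_mul]
        · simp [if_neg hk]
    have e2 : T ((α • eps P i + eps P j) + β • eps P i)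
        = T (α • eps P i + eps P j) + T (β • eps P i) := hT.addQI QI2
    have e3 : T (α • eps P i + eps P j) = T (α • eps P i) + T (eps P j) := by
      have h6 := hT.add_eps hij α 1
      rw [one_smul] at h6
      exact h6
    have hrew : (α+β) • eps P i + (1 : Ω →ₘ[P] ℝ) • eps P j
        = (α • eps P i + eps P j) + β • eps P i := by
      rw [one_smul]; module
    have hkey : T ((α+β) • eps P i) + T (eps P j)
        = (T (α • eps P i) + T (β • eps P i)) + T (eps P j) := by
      have h7 : T ((α+β) • eps P i) + T (eps P j)
          = T ((α+β) • eps P i + (1 : Ω →ₘ[P] ℝ) • eps P j) := by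
        rw [e1, one_smul]
      rw [h7, hrew, e2, e3]
      abel
    have hkey2 : T ((α+β) • eps P i) = T (α • eps P i) + T (β • eps P i) :=
      add_right_cancel hkey
    apply huniq
    rw [hkey2, hσ i α, hσ i β, ← add_smul]
  have hmulkey : ∀ (i j : Fin n), i ≠ j → ∀ a b : Ω →ₘ[P] ℝ,
      σ i (a*b) = σ j b * σ i a := by
    intro i j hij a b
    have hne : a • eps P i ≠ eps P j := by
      intro h
      have h4 : a * eps P i j = eps P j j := congrFun h j
      rw [eps_apply, eps_apply] at h4
      simp only [if_neg (Ne.symm hij), if_pos rfl, mul_zero] at h4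
      exact one_ne_zero_R h4.symm
    obtain ⟨s, hs⟩ := hT.line_mem hne b
    have hz : b • (a • eps P i) + (1-b) • eps P j
        = (a*b) • eps P i + (1-b) • eps P j := by module
    rw [hz] at hs
    have e4 : T ((a*b) • eps P i + (1-b) • eps P j)
        = T ((a*b) • eps P i) + T ((1-b) • eps P j) := hT.add_eps hij _ _
    rw [e4, hσ i (a*b), hσ j (1-b), hσ i a] at hs
    have hs' : σ i (a*b) • T (eps P i) + σ j (1-b) • T (eps P j)
        = (s * σ i a) • T (eps P i) + (1-s) • T (eps P j) := by
      rw [hs]; module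
    obtain ⟨hm1, hm2⟩ := hT.match_pair hij hs'
    have hjb : σ j (1-b) = 1 - σ j b := by
      have h7 : σ j ((1-b) + b) = σ j (1-b) + σ j b := hσadd j _ _
      rw [sub_add_cancel, hσ1 j] at h7
      exact eq_sub_of_add_eq h7.symm
    have hsval : s = σ j b := by
      rw [hjb] at hm2
      have h8 : σ j b = s := by
        rw [← sub_sub_cancel 1 (σ j b), hm2, sub_sub_cancel]
      exact h8.symm
    rw [hm1, hsval]
  have hσeq : ∀ (i j : Fin n), i ≠ j → ∀ b, σ i b = σ j b := by
    intro i j hij b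
    have h9 := hmulkey i j hij 1 b
    rw [one_mul, hσ1 i, mul_one] at h9
    exact h9
  have hσmul : ∀ i a b, σ i (a*b) = σ i a * σ i b := by
    intro i a b
    obtain ⟨j, hj⟩ := hpartner i
    have hij := Ne.symm hj
    rw [hmulkey i j hij a b, hσeq j i hj b]
    ring
  intro i α
  suffices hid : σ i α = α by rw [hσ i α, hid]
  have hσsub : ∀ x y : Ω →ₘ[P] ℝ, σ i (x - y) = σ i x - σ i y := by
    intro x y
    have h1 : σ i ((x - y) + y) = σ i (x-y) + σ i y := hσadd i _ _
    rw [sub_add_cancel] at h1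
    exact eq_sub_of_add_eq h1.symm
  have hσneg : ∀ x : Ω →ₘ[P] ℝ, σ i (-x) = - σ i x := by
    intro x
    have h1 : σ i (x + -x) = σ i x + σ i (-x) := hσadd i x (-x)
    have h0 : x + -x = 0 := by ring
    rw [h0, hσ0 i] at h1
    linear_combination -h1
  have hCneg : ∀ r : ℝ, C P (-r) = - C P r := by
    intro r
    have h0 : r + -r = 0 := by ring
    have h1 : C P r + C P (-r) = 0 := by rw [C_add, h0, C_zero]
    linear_combination h1
  have hσCnat : ∀ k : ℕ, σ i (C P (k:ℝ)) = C P (k:ℝ) := by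
    intro k
    induction k with
    | zero =>
      have h0 : ((0:ℕ):ℝ) = 0 := by norm_num
      rw [h0, C_zero, hσ0 i]
    | succ m ihm =>
      have hc : C P ((m+1:ℕ):ℝ) = C P (m:ℝ) + 1 := by
        rw [← C_one (P := P), C_add]
        congr 1
        push_cast; ring
      rw [hc, hσadd, ihm, hσ1 i]
  have hσC : ∀ q : ℚ, σ i (C P (q:ℝ)) = C P (q:ℝ) := by
    intro q
    have hden : ((q.den:ℕ):ℝ) ≠ 0 := by
      have := q.pos
      exact_mod_cast this.ne'
    have hnum : σ i (C P ((q.num):ℝ)) = C P ((q.num):ℝ) := by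
      obtain ⟨m, hm | hm⟩ := Int.eq_nat_or_neg q.num
      · rw [hm]
        push_cast
        exact hσCnat m
      · rw [hm]
        push_cast
        rw [hCneg (m:ℝ), hσneg, hσCnat m]
    have hkey : C P (q:ℝ) * C P (q.den:ℝ) = C P ((q.num):ℝ) := by
      rw [C_mul]
      congr 1
      exact_mod_cast Rat.mul_den_eq_num q
    have happ : σ i (C P (q:ℝ)) * C P (q.den:ℝ) = C P ((q.num):ℝ) := by
      have h3 := congrArg (σ i) hkey
      rw [hσmul, hσCnat q.den, hnum] at h3
      exact h3
    have hinv : C P (q.den:ℝ) * C P ((q.den:ℝ)⁻¹) = 1 := by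
      rw [C_mul, mul_inv_cancel₀ hden, C_one]
    calc σ i (C P (q:ℝ))
        = σ i (C P (q:ℝ)) * (C P (q.den:ℝ) * C P ((q.den:ℝ)⁻¹)) := by rw [hinv, mul_one]
    _ = (σ i (C P (q:ℝ)) * C P (q.den:ℝ)) * C P ((q.den:ℝ)⁻¹) := by ring
    _ = C P ((q.num):ℝ) * C P ((q.den:ℝ)⁻¹) := by rw [happ]
    _ = C P ((q.num:ℝ) * (q.den:ℝ)⁻¹) := C_mul _ _
    _ = C P (q:ℝ) := by
        congr 1
        rw [Rat.cast_def]
        ring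
  have hσnn : ∀ x : Ω →ₘ[P] ℝ, (∀ᵐ ω ∂P, 0 ≤ x ω) → (∀ᵐ ω ∂P, 0 ≤ (σ i x) ω) := by
    intro x hx
    obtain ⟨β, hβ⟩ := exists_sq_of_nonneg x hx
    have h1 : σ i x = σ i β * σ i β := by rw [← hβ, hσmul]
    rw [h1]
    exact sq_nonneg_ae (σ i β)
  obtain ⟨g, hg, hgl⟩ := exists_rep α
  have mainq : ∀ q : ℚ, ∀ᵐ ω ∂P,
      (g ω ≤ (q:ℝ) → (σ i α) ω ≤ (q:ℝ)) ∧ (¬ g ω ≤ (q:ℝ) → (q:ℝ) ≤ (σ i α) ω) := by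
    intro q
    have hAqm : MeasurableSet (g ⁻¹' Set.Iic (q:ℝ)) := hg measurableSet_Iic
    have claim1 : ∀ᵐ ω ∂P, 0 ≤ (ind P hAqm * (C P (q:ℝ) - α)) ω := by
      filter_upwards [AEEqFun.coeFn_mul (ind P hAqm) (C P (q:ℝ) - α), coeFn_ind hAqm,
        AEEqFun.coeFn_sub (C P (q:ℝ)) α, coeFn_C (P := P) (q:ℝ), hgl] with ω h1 h2 h3 h4 h5
      rw [h1, Pi.mul_apply, h2, h3, Pi.sub_apply, h4, h5]
      by_cases hω : ω ∈ g ⁻¹' Set.Iic (q:ℝ)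
      · have hle : g ω ≤ (q:ℝ) := hω
        rw [Set.indicator_of_mem hω]
        simp only [one_mul]
        linarith
      · rw [Set.indicator_of_notMem hω, zero_mul]
    have claim2 : ∀ᵐ ω ∂P, 0 ≤ ((1 - ind P hAqm) * (α - C P (q:ℝ))) ω := by
      filter_upwards [AEEqFun.coeFn_mul (1 - ind P hAqm) (α - C P (q:ℝ)),
        AEEqFun.coeFn_sub (1:Ω →ₘ[P] ℝ) (ind P hAqm),
        AEEqFun.coeFn_one (α := Ω) (β := ℝ) (μ := P),
        coeFn_ind hAqm, AEEqFun.coeFn_sub α (C P (q:ℝ)), coeFn_C (P := P) (q:ℝ), hgl]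
        with ω h1 h2 h3 h4 h5 h6 h7
      rw [h1, Pi.mul_apply, h2, Pi.sub_apply, h3, h4, h5, Pi.sub_apply, h6, h7]
      by_cases hω : ω ∈ g ⁻¹' Set.Iic (q:ℝ)
      · rw [Set.indicator_of_mem hω]
        simp
      · have hgt : ¬ g ω ≤ (q:ℝ) := hω
        rw [Set.indicator_of_notMem hω]
        simp only [Pi.one_apply, sub_zero, one_mul]
        have := not_le.1 hgt
        linarith
    have happ1 : σ i (ind P hAqm * (C P (q:ℝ) - α)) = ind P hAqm * (C P (q:ℝ) - σ i α) := by
      rw [hσmul, hσind i hAqm, hσsub, hσC]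
    have happ2 : σ i ((1 - ind P hAqm) * (α - C P (q:ℝ)))
        = (1 - ind P hAqm) * (σ i α - C P (q:ℝ)) := by
      rw [hσmul, hσsub, hσsub, hσ1 i, hσind i hAqm, hσC]
    have n1 := hσnn _ claim1
    rw [happ1] at n1
    have n2 := hσnn _ claim2
    rw [happ2] at n2
    filter_upwards [n1, n2, AEEqFun.coeFn_mul (ind P hAqm) (C P (q:ℝ) - σ i α),
      coeFn_ind hAqm, AEEqFun.coeFn_sub (C P (q:ℝ)) (σ i α), coeFn_C (P := P) (q:ℝ),
      AEEqFun.coeFn_mul (1 - ind P hAqm) (σ i α - C P (q:ℝ)),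
      AEEqFun.coeFn_sub (1:Ω →ₘ[P] ℝ) (ind P hAqm),
      AEEqFun.coeFn_one (α := Ω) (β := ℝ) (μ := P),
      AEEqFun.coeFn_sub (σ i α) (C P (q:ℝ))]
      with ω k1 k2 k3 k4 k5 k6 k7 k8 k9 k10
    constructor
    · intro hle
      have hω : ω ∈ g ⁻¹' Set.Iic (q:ℝ) := hle
      rw [k3, Pi.mul_apply, k4, k5, Pi.sub_apply, k6, Set.indicator_of_mem hω, one_mul] at k1
      linarith
    · intro hnle
      have hω : ω ∉ g ⁻¹' Set.Iic (q:ℝ) := hnle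
      rw [k7, Pi.mul_apply, k8, Pi.sub_apply, k9, k4, k10, Pi.sub_apply, k6,
        Set.indicator_of_notMem hω, Pi.one_apply, sub_zero, one_mul] at k2
      linarith
  have hall : ∀ᵐ ω ∂P, ∀ q : ℚ,
      (g ω ≤ (q:ℝ) → (σ i α) ω ≤ (q:ℝ)) ∧ (¬ g ω ≤ (q:ℝ) → (q:ℝ) ≤ (σ i α) ω) :=
    (MeasureTheory.ae_all_iff).2 mainq
  apply AEEqFun.ext
  filter_upwards [hall, hgl] with ω h1 h2
  rw [h2]
  apply le_antisymm
  · by_contra hlt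
    push_neg at hlt
    obtain ⟨q, hq1, hq2⟩ := exists_rat_btwn hlt
    exact absurd ((h1 q).1 (le_of_lt hq1)) (not_le.2 hq2)
  · by_contra hlt
    push_neg at hlt
    obtain ⟨q, hq1, hq2⟩ := exists_rat_btwn hlt
    exact absurd ((h1 q).2 (not_le.2 hq2)) (not_le.2 hq1)

lemma Nice.decomp [IsProbabilityMeasure P] (hn : 2 ≤ n) (u : Fin n → Ω →ₘ[P] ℝ) :
    T u = ∑ i, (u i) • T (eps P i) := by
  classical
  suffices H : ∀ (s : Finset (Fin n)) (u : Fin n → Ω →ₘ[P] ℝ), (∀ i ∉ s, u i = 0) →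
      T u = ∑ i ∈ s, (u i) • T (eps P i) by
    exact H Finset.univ u (by simp)
  intro s
  induction s using Finset.induction_on with
  | empty =>
    intro u hu
    have h0 : u = 0 := funext fun i => hu i (by simp)
    rw [h0, hT.zero, Finset.sum_empty]
  | @insert k s hk ih =>
    intro u hu
    set u' : Fin n → Ω →ₘ[P] ℝ := Function.update u k 0 with hu'
    have huk : u' k = 0 := by rw [hu']; exact Function.update_self _ _ _
    have hsplit : u = (u k) • eps P k + u' := by
      funext m
      show u m = u k * eps P k m + u' m
      by_cases hm : m = k
      · subst hm
        rw [eps_apply, if_pos rfl, mul_one, huk, add_zero]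
      · rw [eps_apply, if_neg hm, mul_zero, zero_add, hu', Function.update_of_ne hm]
    have hQI : ∀ γ δ : Ω →ₘ[P] ℝ, γ • ((u k) • eps P k) + δ • u' = 0 →
        γ • ((u k) • eps P k) = 0 ∧ δ • u' = 0 := by
      intro γ δ h
      have hk0 : γ * u k = 0 := by
        have h4 : γ * (u k * eps P k k) + δ * u' k = 0 := congrFun h k
        rw [eps_apply, if_pos rfl, mul_one, huk, mul_zero, add_zero] at h4
        exact h4
      have hother : ∀ m, δ * u' m = 0 := by
        intro m
        by_cases hm : m = k
        · subst hm; rw [huk, mul_zero]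
        · have h4 : γ * (u k * eps P k m) + δ * u' m = 0 := congrFun h m
          rw [eps_apply, if_neg hm, mul_zero, mul_zero, zero_add] at h4
          exact h4
      constructor
      · funext m
        show γ * (u k * eps P k m) = 0
        rw [eps_apply]
        by_cases hm : m = k
        · rw [if_pos hm, mul_one]
          exact hk0
        · rw [if_neg hm, mul_zero, mul_zero]
      · funext m
        exact hother m
    have hadd : T ((u k) • eps P k + u') = T ((u k) • eps P k) + T u' := hT.addQI hQI
    have hu'su : ∀ i ∉ s, u' i = 0 := by
      intro i hi
      by_cases hik : i = k
      · subst hik; exact huk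
      · rw [hu', Function.update_of_ne hik]
        exact hu i (by simp [hik, hi])
    calc T u = T ((u k) • eps P k + u') := by rw [← hsplit]
    _ = T ((u k) • eps P k) + T u' := hadd
    _ = (u k) • T (eps P k) + ∑ i ∈ s, (u' i) • T (eps P i) := by
        rw [hT.homog hn k (u k), ih u' hu'su]
    _ = (u k) • T (eps P k) + ∑ i ∈ s, (u i) • T (eps P i) := by
        congr 1
        apply Finset.sum_congr rfl
        intro i hi
        have hik : i ≠ k := by rintro rfl; exact hk hi
        rw [hu', Function.update_of_ne hik]
    _ = ∑ i ∈ insert k s, (u i) • T (eps P i) := (Finset.sum_insert hk).symm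

end Main





end FTAG


/-- Theorem 3.1, the fundamental theorem of affine geometry in `(L⁰)ⁿ`:
for `n ≥ 2`, an injective map `T : (L⁰)ⁿ → (L⁰)ⁿ` with the local property which maps
each `L⁰`-line onto an `L⁰`-line must be `L⁰`-affine linear. -/
theorem fundamental_theorem_of_affine_geometry
    [IsProbabilityMeasure P] (n : ℕ) (hn : 2 ≤ n)
    (T : (Fin n → Ω →ₘ[P] ℝ) → (Fin n → Ω →ₘ[P] ℝ))
    (hinj : Function.Injective T)
    (hloc : ∀ (x : Fin n → Ω →ₘ[P] ℝ) (A : Set Ω) (hA : MeasurableSet A),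
        ind P hA • T (ind P hA • x) = ind P hA • T x)
    (hline : ∀ x y : Fin n → Ω →ₘ[P] ℝ, x ≠ y →
        T '' {z | ∃ lam : Ω →ₘ[P] ℝ, z = lam • x + (1 - lam) • y}
          = {z | ∃ lam : Ω →ₘ[P] ℝ, z = lam • T x + (1 - lam) • T y}) :
    (∀ x y : Fin n → Ω →ₘ[P] ℝ,
        T (x + y) - T 0 = (T x - T 0) + (T y - T 0)) ∧
    (∀ (ξ : Ω →ₘ[P] ℝ) (x : Fin n → Ω →ₘ[P] ℝ),
        T (ξ • x) - T 0 = ξ • (T x - T 0)) := by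

  classical
  set S : (Fin n → Ω →ₘ[P] ℝ) → (Fin n → Ω →ₘ[P] ℝ) := fun x => T x - T 0 with hSdef
  have hSnice : FTAG.Nice P n S := by
    constructor
    · intro a b hab
      apply hinj
      have h1 : T a - T 0 = T b - T 0 := hab
      exact sub_left_inj.1 h1
    · intro x A hA
      show ind P hA • (T (ind P hA • x) - T 0) = ind P hA • (T x - T 0)
      rw [smul_sub, smul_sub, hloc x A hA]
    · intro x y hxy
      ext z
      simp only [Set.mem_image, Set.mem_setOf_eq]
      constructor
      · rintro ⟨w, ⟨lam, rfl⟩, rfl⟩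
        have hw : T (lam • x + (1-lam) • y) ∈
            {z | ∃ l : Ω →ₘ[P] ℝ, z = l • T x + (1-l) • T y} := by
          rw [← hline x y hxy]
          exact Set.mem_image_of_mem T ⟨lam, rfl⟩
        obtain ⟨mu, hmu⟩ := hw
        refine ⟨mu, ?_⟩
        show T (lam • x + (1-lam) • y) - T 0 = mu • (T x - T 0) + (1-mu) • (T y - T 0)
        rw [hmu]; module
      · rintro ⟨mu, rfl⟩
        have hmem : mu • T x + (1-mu) • T y ∈
            T '' {z | ∃ l : Ω →ₘ[P] ℝ, z = l • x + (1-l) • y} := by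
          rw [hline x y hxy]
          exact ⟨mu, rfl⟩
        obtain ⟨w, hw1, hw2⟩ := hmem
        refine ⟨w, hw1, ?_⟩
        show T w - T 0 = mu • (T x - T 0) + (1-mu) • (T y - T 0)
        rw [hw2]; module
    · show T 0 - T 0 = 0
      exact sub_self _
  constructor
  · intro x y
    show S (x+y) = S x + S y
    rw [hSnice.decomp hn (x+y), hSnice.decomp hn x, hSnice.decomp hn y,
      ← Finset.sum_add_distrib]
    apply Finset.sum_congr rfl
    intro i _
    show ((x+y) i) • S (FTAG.eps P i) = x i • S (FTAG.eps P i) + y i • S (FTAG.eps P i)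
    rw [Pi.add_apply, add_smul]
  · intro ξ x
    show S (ξ • x) = ξ • S x
    rw [hSnice.decomp hn (ξ • x), hSnice.decomp hn x, Finset.smul_sum]
    apply Finset.sum_congr rfl
    intro i _
    show ((ξ • x) i) • S (FTAG.eps P i) = ξ • (x i • S (FTAG.eps P i))
    rw [show (ξ • x) i = ξ * x i from rfl, mul_smul]
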